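/- Assume the valuation setup with sum formula on a field K. Let u = (u₁, u₂) and v = (v₁, v₂) be pairs of elements of K^* with u₁ + u₂ = 1 and v₁ + v₂ = 1, and suppose u ≠ v. Then H(u₁, u₂) ≤ H(v₁·u₁^{-1}, v₂·u₂^{-1}). -/
import Mathlib

/-- A valuation setup with sum formula on a field `K`: for each `i` in the index set `I`, a
map `v i : K → ℤ` which restricts to a group homomorphism `Kˣ → ℤ` satisfying the
ultrametric inequality, with only finitely many `v i` nonzero at each `x ≠ 0`, positive
integer degrees `deg i`, and the sum formula `Σ_i v i x · deg i = 0` for `x ≠ 0`. -/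
structure ValuationSetup (K : Type*) [Field K] (I : Type*) where
  v : I → K → ℤ
  deg : I → ℕ
  deg_pos : ∀ i, 0 < deg i
  v_mul : ∀ i (x y : K), x ≠ 0 → y ≠ 0 → v i (x * y) = v i x + v i y
  v_add : ∀ i (x y : K), x ≠ 0 → y ≠ 0 → x + y ≠ 0 → min (v i x) (v i y) ≤ v i (x + y)
  finite_support : ∀ x : K, x ≠ 0 → {i | v i x ≠ 0}.Finite
  sum_formula : ∀ x : K, x ≠ 0 → ∑ᶠ i, v i x * (deg i : ℤ) = 0

/-- The homogeneous height `H^hom(P) = −Σ_i min{v i (P j) : P j ≠ 0} · deg i` of a (nonzero)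
vector `P`. -/
noncomputable def Hhom {K : Type*} [Field K] {I : Type*} (VS : ValuationSetup K I)
    {m : ℕ} (P : Fin m → K) : ℤ :=
  -∑ᶠ i, sInf ((fun j => VS.v i (P j)) '' {j | P j ≠ 0}) * (VS.deg i : ℤ)

section Aux
variable {K : Type*} [Field K] {I : Type*} (VS : ValuationSetup K I)

lemma VS_v_one (i : I) : VS.v i 1 = 0 := by
  have := VS.v_mul i 1 1 one_ne_zero one_ne_zero
  simp at this; omega

lemma VS_v_neg (i : I) (x : K) (hx : x ≠ 0) : VS.v i (-x) = VS.v i x := by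
  have h2 := VS.v_mul i (-1) (-1 : K) (by norm_num) (by norm_num)
  simp [VS_v_one] at h2
  have h1 := VS.v_mul i (-1) x (by norm_num) hx
  simp at h1
  omega

lemma VS_v_inv (i : I) (x : K) (hx : x ≠ 0) : VS.v i x⁻¹ = -VS.v i x := by
  have := VS.v_mul i x x⁻¹ hx (inv_ne_zero hx)
  rw [mul_inv_cancel₀ hx, VS_v_one] at this
  omega

lemma sInf_triple (x y z : ℤ) : sInf ({x, y, z} : Set ℤ) = min x (min y z) := by
  rw [csInf_insert (Set.toFinite _).bddBelow ⟨y, by simp⟩,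
    csInf_insert (Set.toFinite _).bddBelow ⟨z, by simp⟩, csInf_singleton]

lemma Hhom_pair (a b : K) (ha : a ≠ 0) (hb : b ≠ 0) :
    Hhom VS ![1, a, b] = -∑ᶠ i, min 0 (min (VS.v i a) (VS.v i b)) * (VS.deg i : ℤ) := by
  unfold Hhom
  refine congrArg _ (finsum_congr fun i => ?_)
  have huniv : {j | ![(1:K),a,b] j ≠ 0} = Set.univ := by
    ext j; fin_cases j <;> simp [ha, hb]
  have hfun : (fun j => VS.v i (![(1:K),a,b] j)) = ![VS.v i 1, VS.v i a, VS.v i b] := by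
    funext j; fin_cases j <;> simp
  rw [huniv, Set.image_univ, hfun]
  have hr : Set.range ![VS.v i 1, VS.v i a, VS.v i b]
      = {VS.v i 1, VS.v i a, VS.v i b} := by
    ext x; simp [Matrix.range_cons, Matrix.range_empty]; tauto
  rw [hr, VS_v_one, sInf_triple]

end Aux

/-- in the valuation setup, if `u = (u₁, u₂)` and `v = (v₁, v₂)` are distinct
pairs of nonzero elements with `u₁ + u₂ = 1` and `v₁ + v₂ = 1`, then
`H(u₁, u₂) ≤ H(v₁·u₁⁻¹, v₂·u₂⁻¹)`. -/
theorem height_le_height_quotient {K : Type*} [Field K] {I : Type*}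
    (VS : ValuationSetup K I) (u₁ u₂ v₁ v₂ : K)
    (hu₁ : u₁ ≠ 0) (hu₂ : u₂ ≠ 0) (hv₁ : v₁ ≠ 0) (hv₂ : v₂ ≠ 0)
    (husol : u₁ + u₂ = 1) (hvsol : v₁ + v₂ = 1) (hne : (u₁, u₂) ≠ (v₁, v₂)) :
    Hhom VS ![1, u₁, u₂] ≤ Hhom VS ![1, v₁ * u₁⁻¹, v₂ * u₂⁻¹] := by
  set a := fun i => VS.v i u₁ with ha
  set b := fun i => VS.v i u₂ with hb
  set p := fun i => VS.v i v₁ with hp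
  set q := fun i => VS.v i v₂ with hq
  have hd : u₁ - v₁ ≠ 0 := by
    intro h
    apply hne
    have h1 : u₁ = v₁ := sub_eq_zero.mp h
    have h2 : u₂ = v₂ := by linear_combination husol - hvsol - h1
    simp [h1, h2]
  set δ := fun i => VS.v i (u₁ - v₁) with hδ
  -- rewrite both heights
  rw [Hhom_pair VS u₁ u₂ hu₁ hu₂,
    Hhom_pair VS (v₁ * u₁⁻¹) (v₂ * u₂⁻¹) (by simp [hv₁, hu₁]) (by simp [hv₂, hu₂])]
  have hq1 : ∀ i, VS.v i (v₁ * u₁⁻¹) = p i - a i := fun i => by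
    rw [VS.v_mul i v₁ u₁⁻¹ hv₁ (inv_ne_zero hu₁), VS_v_inv VS i u₁ hu₁]; ring
  have hq2 : ∀ i, VS.v i (v₂ * u₂⁻¹) = q i - b i := fun i => by
    rw [VS.v_mul i v₂ u₂⁻¹ hv₂ (inv_ne_zero hu₂), VS_v_inv VS i u₂ hu₂]; ring
  simp only [hq1, hq2, neg_le_neg_iff]
  -- support set
  have hS : ({i | a i ≠ 0} ∪ {i | b i ≠ 0} ∪ {i | p i ≠ 0} ∪ {i | q i ≠ 0}
      ∪ {i | δ i ≠ 0}).Finite := by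
    refine (((((VS.finite_support u₁ hu₁).union (VS.finite_support u₂ hu₂)).union
      (VS.finite_support v₁ hv₁)).union (VS.finite_support v₂ hv₂)).union
      (VS.finite_support _ hd))
  set S := hS.toFinset with hSdef
  have memS : ∀ i, i ∉ S → a i = 0 ∧ b i = 0 ∧ p i = 0 ∧ q i = 0 ∧ δ i = 0 := by
    intro i hi
    simp only [hSdef, Set.Finite.mem_toFinset, Set.mem_union, Set.mem_setOf_eq, not_or] at hi
    tauto
  have key : ∀ (f : I → ℤ), (∀ i, i ∉ S → f i = 0) → ∑ᶠ i, f i = ∑ i ∈ S, f i := by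
    intro f hf
    exact finsum_eq_sum_of_support_subset f (fun i hi => by
      by_contra h; exact hi (hf i h))
  rw [key (fun i => min 0 (min (p i - a i) (q i - b i)) * (VS.deg i : ℤ))
      (fun i hi => by obtain ⟨h1, h2, h3, h4, _⟩ := memS i hi; simp only [h1, h2, h3, h4]; simp),
    key (fun i => min 0 (min (a i) (b i)) * (VS.deg i : ℤ))
      (fun i hi => by obtain ⟨h1, h2, _, _, _⟩ := memS i hi; simp only [h1, h2]; simp)]
  -- sum formula pieces
  have sf : ∀ (x : K), x ≠ 0 → (∀ i, i ∉ S → VS.v i x = 0) →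
      ∑ i ∈ S, VS.v i x * (VS.deg i : ℤ) = 0 := by
    intro x hx h0
    rw [← key _ (fun i hi => by rw [h0 i hi]; ring)]
    exact VS.sum_formula x hx
  have sfa := sf u₁ hu₁ (fun i hi => (memS i hi).1)
  have sfb := sf u₂ hu₂ (fun i hi => (memS i hi).2.1)
  have sfδ := sf (u₁ - v₁) hd (fun i hi => (memS i hi).2.2.2.2)
  -- pointwise inequality
  have pointwise : ∀ i ∈ S, min 0 (min (p i - a i) (q i - b i)) * (VS.deg i : ℤ)
      ≤ (min 0 (min (a i) (b i)) + δ i - a i - b i) * (VS.deg i : ℤ) := by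
    intro i _
    have h1 : min (a i) (p i) ≤ δ i := by
      have := VS.v_add i u₁ (-v₁) hu₁ (neg_ne_zero.mpr hv₁) (by rwa [← sub_eq_add_neg])
      rw [← sub_eq_add_neg, VS_v_neg VS i v₁ hv₁] at this
      exact this
    have h2 : min (b i) (q i) ≤ δ i := by
      have hxy : v₂ + -u₂ = u₁ - v₁ := by linear_combination hvsol - husol
      have := VS.v_add i v₂ (-u₂) hv₂ (neg_ne_zero.mpr hu₂) (by rwa [hxy])
      rw [hxy, VS_v_neg VS i u₂ hu₂] at this
      exact le_trans (le_of_eq (min_comm _ _)) this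
    have h3 : min (a i + q i) (b i + p i) ≤ δ i := by
      have hxy : u₁ * v₂ + -(u₂ * v₁) = u₁ - v₁ := by
        linear_combination u₁ * hvsol - v₁ * husol
      have := VS.v_add i (u₁ * v₂) (-(u₂ * v₁)) (by simp [hu₁, hv₂])
        (by simp [hu₂, hv₁]) (by rwa [hxy])
      rw [hxy, VS_v_neg VS i (u₂ * v₁) (by simp [hu₂, hv₁]),
        VS.v_mul i u₁ v₂ hu₁ hv₂, VS.v_mul i u₂ v₁ hu₂ hv₁] at this
      exact this
    have hdeg : (0 : ℤ) ≤ (VS.deg i : ℤ) := Int.ofNat_nonneg _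
    have : min 0 (min (p i - a i) (q i - b i))
        ≤ min 0 (min (a i) (b i)) + δ i - a i - b i := by omega
    exact mul_le_mul_of_nonneg_right this hdeg
  calc ∑ i ∈ S, min 0 (min (p i - a i) (q i - b i)) * (VS.deg i : ℤ)
      ≤ ∑ i ∈ S, (min 0 (min (a i) (b i)) + δ i - a i - b i) * (VS.deg i : ℤ) :=
        Finset.sum_le_sum pointwise
    _ = ∑ i ∈ S, min 0 (min (a i) (b i)) * (VS.deg i : ℤ)
        + ∑ i ∈ S, δ i * (VS.deg i : ℤ) - ∑ i ∈ S, a i * (VS.deg i : ℤ)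
        - ∑ i ∈ S, b i * (VS.deg i : ℤ) := by
        rw [← Finset.sum_add_distrib, ← Finset.sum_sub_distrib, ← Finset.sum_sub_distrib]
        exact Finset.sum_congr rfl fun i _ => by ring
    _ = ∑ i ∈ S, min 0 (min (a i) (b i)) * (VS.deg i : ℤ) := by
        rw [sfδ, sfa, sfb]; ring
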